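/- Let p be a prime, G a finite group, P a normal p-subgroup of G, and H a subgroup of G such that the iterated commutator subgroup ⁅⁅P, H⁆, H⁆ is trivial. Then the subgroup H ∩ C_G(P) is normal in H and the quotient group H / (H ∩ C_G(P)) is a p-group. -/

import Mathlib

theorem centralizer_normal_aux {G : Type*} [Group G] {P : Subgroup G} (hPn : P.Normal) :
    (Subgroup.centralizer (P : Set G)).Normal := by
  constructor
  intro g hg n
  rw [Subgroup.mem_centralizer_iff] at hg ⊢
  intro x hx
  have hx' : n⁻¹ * x * n ∈ P := by
    have := hPn.conj_mem x hx n⁻¹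
    simpa [mul_assoc] using this
  have := hg _ hx'
  -- (n⁻¹ x n) g = g (n⁻¹ x n)  ⇒  x (n g n⁻¹) = (n g n⁻¹) x
  have h2 : x * (n * g * n⁻¹) = (n * g * n⁻¹) * x := by
    have := congrArg (fun y => n * y * n⁻¹) this
    simpa [mul_assoc] using this
  exact h2

/-- If `P` is a normal `p`-subgroup of a finite group `G` and `H` is a subgroup
with `⁅⁅P, H⁆, H⁆ = ⊥`, then `H ∩ C_G(P)` is normal in `H` and the quotient
`H / (H ∩ C_G(P))` is a `p`-group. -/
theorem stmt_2 {p : ℕ} (hp : p.Prime) {G : Type*} [Group G] [Finite G]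
    (P H : Subgroup G) (hPn : P.Normal) (hP : IsPGroup p P)
    (hcomm : ⁅⁅P, H⁆, H⁆ = ⊥) :
    ∃ hn : ((Subgroup.centralizer (P : Set G)).subgroupOf H).Normal,
      @IsPGroup p (H ⧸ (Subgroup.centralizer (P : Set G)).subgroupOf H)
        (@QuotientGroup.Quotient.group _ _ _ hn) := by
  have hCn : (Subgroup.centralizer (P : Set G)).Normal := centralizer_normal_aux hPn
  refine ⟨hCn.subgroupOf H, ?_⟩
  -- [P,H] centralizes H
  have hcent : ⁅P, H⁆ ≤ Subgroup.centralizer (H : Set G) :=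
    Subgroup.commutator_eq_bot_iff_le_centralizer.mp hcomm
  -- card of P is a power of p
  haveI := Fact.mk hp
  obtain ⟨n, hn⟩ := IsPGroup.iff_card.mp hP
  set N := p ^ n with hN
  -- key: for h ∈ H, h^N centralizes P
  have key : ∀ h : G, h ∈ H → h ^ N ∈ Subgroup.centralizer (P : Set G) := by
    intro h hh
    rw [Subgroup.mem_centralizer_iff]
    intro x hx
    open scoped commutatorElement in
    set c : G := ⁅x⁻¹, h⁻¹⁆ with hc
    have hcP : c ∈ ⁅P, H⁆ :=
      Subgroup.commutator_mem_commutator (P.inv_mem hx) (H.inv_mem hh)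
    have hch : c * h = h * c := by
      have := (Subgroup.mem_centralizer_iff.mp (hcent hcP)) h hh
      exact this.symm
    have hstep : h⁻¹ * x * h = x * c := by
      simp [hc, commutatorElement_def, mul_assoc]
    have hiter : ∀ m : ℕ, h⁻¹ ^ m * x * h ^ m = x * c ^ m := by
      intro m
      induction m with
      | zero => simp
      | succ m ih =>
        have hchm : c ^ m * h = h * c ^ m := (Commute.pow_left hch m : Commute (c ^ m) h)
        calc h⁻¹ ^ (m + 1) * x * h ^ (m + 1)
            = h⁻¹ * (h⁻¹ ^ m * x * h ^ m) * h := by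
              rw [pow_succ, pow_succ']
              group
          _ = h⁻¹ * (x * c ^ m) * h := by rw [ih]
          _ = (h⁻¹ * x * h) * (h⁻¹ * c ^ m * h) := by group
          _ = (x * c) * c ^ m := by
              rw [hstep]
              congr 1
              rw [show h⁻¹ * c ^ m * h = h⁻¹ * (c ^ m * h) by group, hchm]
              group
          _ = x * c ^ (m + 1) := by rw [pow_succ]; group
    -- c ∈ P, so c^N = 1
    have hcPmem : c ∈ P := Subgroup.commutator_le_left P H hcP
    have hcN : c ^ N = 1 := by
      have : Nat.card P = N := hn
      have horder : (⟨c, hcPmem⟩ : P) ^ N = 1 := by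
        rw [← this]
        exact pow_card_eq_one'
      have := congrArg (Subtype.val) horder
      simpa using this
    have := hiter N
    rw [hcN, mul_one] at this
    -- h⁻¹^N * x * h^N = x ⇒ x * h^N = h^N * x
    calc x * h ^ N = h ^ N * (h⁻¹ ^ N * x * h ^ N) := by group
      _ = h ^ N * x := by rw [this]
  -- conclude quotient is p-group
  intro q
  induction q using QuotientGroup.induction_on with
  | H h =>
    refine ⟨n, ?_⟩
    rw [← QuotientGroup.mk_pow, QuotientGroup.eq_one_iff]
    exact Subgroup.mem_subgroupOf.mpr (by simpa using key (h : G) h.2)
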